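/- The derivative of the expectile score function S(q) := τ·E[((q−X)₊)²] + (1−τ)·E[((q−X)₋)²] with respect to q equals 2·(τ·E[(q−X)₊] − (1−τ)·E[(X−q)₊]), for every q ∈ ℝ and square-integrable X. -/

import Mathlib

open MeasureTheory Set Metric

lemma posPart_sq_hasDerivAt (a : ℝ) :
    HasDerivAt (fun y : ℝ => (max y 0) ^ 2) (2 * max a 0) a := by
  rcases lt_trichotomy a 0 with h | h | h
  · have : (fun y : ℝ => (max y 0) ^ 2) =ᶠ[nhds a] fun _ => (0:ℝ) := by
      filter_upwards [eventually_lt_nhds h] with y hy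
      simp [max_eq_right hy.le]
    have h0 : HasDerivAt (fun _ : ℝ => (0:ℝ)) 0 a := hasDerivAt_const _ _
    simpa [max_eq_right h.le] using h0.congr_of_eventuallyEq this
  · subst h
    rw [hasDerivAt_iff_isLittleO]
    rw [Asymptotics.isLittleO_iff]
    intro c hc
    filter_upwards [eventually_abs_sub_lt 0 hc] with y hy
    simp only [sub_zero] at hy
    have hmax : max y 0 ≤ |y| := by
      rcases le_or_gt y 0 with h | h
      · simp [max_eq_right h, abs_nonneg]
      · simp [max_eq_left h.le, le_abs_self]
    have hle : ‖(max y 0) ^ 2‖ ≤ c * ‖y‖ := by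
      rw [Real.norm_eq_abs, Real.norm_eq_abs, abs_of_nonneg (by positivity : (0:ℝ) ≤ (max y 0)^2)]
      calc max y 0 ^ 2 = max y 0 * max y 0 := sq (max y 0)
        _ ≤ |y| * |y| := mul_le_mul hmax hmax (le_max_right _ _) (abs_nonneg _)
        _ ≤ c * |y| := mul_le_mul_of_nonneg_right hy.le (abs_nonneg _)
    simpa using hle
  · have : (fun y : ℝ => (max y 0) ^ 2) =ᶠ[nhds a] fun y => y ^ 2 := by
      filter_upwards [eventually_gt_nhds h] with y hy
      simp [max_eq_left hy.le]
    have h0 : HasDerivAt (fun y : ℝ => y ^ 2) (2 * a) a := by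
      simpa using (hasDerivAt_pow 2 a)
    simpa [max_eq_left h.le] using h0.congr_of_eventuallyEq this

/-- The derivative of the expectile score function
S(q) := τ·E[((q−X)₊)²] + (1−τ)·E[((q−X)₋)²] with respect to q equals
2·(τ·E[(q−X)₊] − (1−τ)·E[(X−q)₊]), for every q ∈ ℝ and square-integrable X. -/
theorem expectile_score_hasDerivAt
    {Ω : Type*} [MeasurableSpace Ω] (μ : Measure Ω) [IsProbabilityMeasure μ]
    (τ : ℝ) (hτ : τ ∈ Set.Ioo (0 : ℝ) 1)
    (X : Ω → ℝ) (hX : MemLp X 2 μ) (q : ℝ) :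
    HasDerivAt (fun p : ℝ =>
        τ * ∫ ω, (max (p - X ω) 0) ^ 2 ∂μ + (1 - τ) * ∫ ω, (max (X ω - p) 0) ^ 2 ∂μ)
      (2 * (τ * ∫ ω, max (q - X ω) 0 ∂μ - (1 - τ) * ∫ ω, max (X ω - q) 0 ∂μ)) q := by
  have hXm : AEStronglyMeasurable X μ := hX.aestronglyMeasurable
  have hX1 : Integrable X μ := hX.integrable (by norm_num)
  have bound_int : Integrable (fun ω => 2 * (|X ω| + |q| + 1)) μ :=
    ((hX1.abs.add (integrable_const _)).add (integrable_const 1)).const_mul 2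
  have hm1 : ∀ p : ℝ, AEStronglyMeasurable (fun ω => max (p - X ω) 0) μ := fun p =>
    (aestronglyMeasurable_const.sub hXm).sup aestronglyMeasurable_const
  have hm2 : ∀ p : ℝ, AEStronglyMeasurable (fun ω => max (X ω - p) 0) μ := fun p =>
    (hXm.sub aestronglyMeasurable_const).sup aestronglyMeasurable_const
  have hsq : ∀ p : ℝ, Integrable (fun ω => (p - X ω) ^ 2) μ := by
    intro p
    have : MemLp (fun ω => p - X ω) 2 μ := (memLp_const p).sub hX
    simpa [sq] using this.integrable_sq
  have hint1 : ∀ p : ℝ, Integrable (fun ω => (max (p - X ω) 0) ^ 2) μ := by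
    intro p
    refine (hsq p).mono' ((hm1 p).pow 2) ?_
    filter_upwards with ω
    rw [Real.norm_eq_abs, abs_of_nonneg (by positivity)]
    rcases le_or_gt (p - X ω) 0 with h | h
    · simp [max_eq_right h, sq_nonneg]
    · rw [max_eq_left h.le]
  have hint2 : ∀ p : ℝ, Integrable (fun ω => (max (X ω - p) 0) ^ 2) μ := by
    intro p
    refine (hsq p).mono' ((hm2 p).pow 2) ?_
    filter_upwards with ω
    rw [Real.norm_eq_abs, abs_of_nonneg (by positivity)]
    rcases le_or_gt (X ω - p) 0 with h | h
    · simp [max_eq_right h, sq_nonneg]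
    · rw [max_eq_left h.le]; nlinarith
  have hbd : ∀ (ω : Ω) (p : ℝ), p ∈ ball q 1 → |p - X ω| ≤ |X ω| + |q| + 1 := by
    intro ω p hp
    have hpq : |p - q| < 1 := by simpa [Real.dist_eq] using hp
    have heq : p - X ω = (p - q) + (q - X ω) := by ring
    have h3 : |q - X ω| ≤ |q| + |X ω| := abs_sub q (X ω)
    calc |p - X ω| = |(p - q) + (q - X ω)| := by rw [← heq]
      _ ≤ |p - q| + |q - X ω| := abs_add_le _ _
      _ ≤ |X ω| + |q| + 1 := by linarith
  have habs : ∀ y : ℝ, |max y 0| ≤ |y| := by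
    intro y
    rcases le_or_gt y 0 with h | h
    · simp [max_eq_right h, abs_nonneg]
    · simp [max_eq_left h.le]
  have h1 : HasDerivAt (fun p : ℝ => ∫ ω, (max (p - X ω) 0) ^ 2 ∂μ)
      (∫ ω, 2 * max (q - X ω) 0 ∂μ) q := by
    have := hasDerivAt_integral_of_dominated_loc_of_deriv_le
      (F := fun p ω => (max (p - X ω) 0) ^ 2)
      (F' := fun p ω => 2 * max (p - X ω) 0)
      (bound := fun ω => 2 * (|X ω| + |q| + 1)) (x₀ := q) (s := ball q 1) (ball_mem_nhds q one_pos)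
      ?_ (hint1 q) ?_ ?_ bound_int ?_
    · exact this.2
    · filter_upwards with p
      exact (hm1 p).pow 2
    · exact (hm1 q).const_mul 2
    · filter_upwards with ω p hp
      rw [Real.norm_eq_abs, abs_mul, abs_two]
      have := (habs (p - X ω)).trans (hbd ω p hp)
      linarith
    · filter_upwards with ω p _
      have := (posPart_sq_hasDerivAt (p - X ω)).comp p
        ((hasDerivAt_id p).sub_const (X ω))
      simpa [Function.comp_def] using this
  have h2 : HasDerivAt (fun p : ℝ => ∫ ω, (max (X ω - p) 0) ^ 2 ∂μ)
      (∫ ω, -(2 * max (X ω - q) 0) ∂μ) q := by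
    have := hasDerivAt_integral_of_dominated_loc_of_deriv_le
      (F := fun p ω => (max (X ω - p) 0) ^ 2)
      (F' := fun p ω => -(2 * max (X ω - p) 0))
      (bound := fun ω => 2 * (|X ω| + |q| + 1)) (x₀ := q) (s := ball q 1) (ball_mem_nhds q one_pos)
      ?_ (hint2 q) ?_ ?_ bound_int ?_
    · exact this.2
    · filter_upwards with p
      exact (hm2 p).pow 2
    · exact ((hm2 q).const_mul 2).neg
    · filter_upwards with ω p hp
      rw [Real.norm_eq_abs, abs_neg, abs_mul, abs_two]
      have h4 : |X ω - p| ≤ |X ω| + |q| + 1 := by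
        rw [abs_sub_comm]; exact hbd ω p hp
      have := (habs (X ω - p)).trans h4
      linarith
    · filter_upwards with ω p _
      have := (posPart_sq_hasDerivAt (X ω - p)).comp p
        ((hasDerivAt_const p (X ω)).sub (hasDerivAt_id p))
      simpa [Function.comp_def] using this
  have hI1 : Integrable (fun ω => max (q - X ω) 0) μ :=
    ((integrable_const q).sub hX1).abs.mono' (hm1 q)
      (Filter.Eventually.of_forall fun ω => by
        simpa [Real.norm_eq_abs] using habs (q - X ω))
  have hI2 : Integrable (fun ω => max (X ω - q) 0) μ :=
    (hX1.sub (integrable_const q)).abs.mono' (hm2 q)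
      (Filter.Eventually.of_forall fun ω => by
        simpa [Real.norm_eq_abs] using habs (X ω - q))
  have hsum := (h1.const_mul τ).add (h2.const_mul (1 - τ))
  refine hsum.congr_deriv ?_
  rw [integral_neg, MeasureTheory.integral_const_mul, MeasureTheory.integral_const_mul]
  ring
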